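/- Let f be holomorphic on the strip S_B = {|Im z| < B}, real on ℝ, with |f| < M, and suppose f(0) = M·(1 - 2/(μ₀ e^{πz/(2B)} g(e^{πz/B} - 1) + 1)) at z = 0 for the g-fraction representation. Then μ₀ = (1+θ₀)/(1-θ₀) and g₁ = (1 - 4θ₁ - θ₀²)/(2(1-θ₀²)), where θ₀ = f(0)/M and θ₁ = (B/(πM))·f'(0). In particular f'(0) > 0 iff g₁ < 1/2, f'(0) < 0 iff g₁ > 1/2, and f'(0) = 0 iff g₁ = 1/2. -/

import Mathlib

open Complex

/-- Let `f` be holomorphic on the strip `S_B`, real on `ℝ`, with `|f| < M`, and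
suppose `f(z) = M(1 - 2/(μ₀ e^{πz/(2B)} g(e^{πz/B}-1) + 1))` on `S_B`, where `g`
is the (analytic limit of the) g-fraction, with `g(0) = 1` and `g'(0) = -g₁`.
Then `μ₀ = (1+θ₀)/(1-θ₀)` and `g₁ = (1 - 4θ₁ - θ₀²)/(2(1-θ₀²))`, where
`θ₀ = f(0)/M` and `θ₁ = (B/(πM))·f'(0)`.  In particular `f'(0) > 0 ↔ g₁ < 1/2`,
`f'(0) < 0 ↔ g₁ > 1/2` and `f'(0) = 0 ↔ g₁ = 1/2`. -/
theorem g_fraction_first_coefficients (B M : ℝ) (hB : 0 < B) (hM : 0 < M)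
    (f g : ℂ → ℂ) (μ₀ g₁ θ₀ θ₁ : ℝ) (hμ₀ : 0 < μ₀)
    (hf : DifferentiableOn ℂ f {z : ℂ | |z.im| < B})
    (hreal : ∀ x : ℝ, (f x).im = 0)
    (hbound : ∀ z ∈ {z : ℂ | |z.im| < B}, ‖f z‖ < M)
    (hg0 : g 0 = 1) (hgdiff : DifferentiableAt ℂ g 0) (hg1 : deriv g 0 = -g₁)
    (hrep : ∀ z ∈ {z : ℂ | |z.im| < B},
      f z = (M:ℂ) * (1 - 2 / ((μ₀:ℂ) * Complex.exp (Real.pi * z / (2*B)) *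
        g (Complex.exp (Real.pi * z / B) - 1) + 1)))
    (hθ₀ : f 0 = (M:ℂ) * (θ₀:ℂ))
    (hθ₁ : deriv f 0 = (Real.pi * M / B : ℂ) * (θ₁:ℂ)) :
    μ₀ = (1 + θ₀) / (1 - θ₀) ∧
    g₁ = (1 - 4*θ₁ - θ₀^2) / (2*(1 - θ₀^2)) ∧
    (0 < θ₁ ↔ g₁ < 1/2) ∧ (θ₁ < 0 ↔ g₁ > 1/2) ∧ (θ₁ = 0 ↔ g₁ = 1/2) := by

  have h0S : (0:ℂ) ∈ {z : ℂ | |z.im| < B} := by simp [hB]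
  have hSopen : IsOpen {z : ℂ | |z.im| < B} :=
    isOpen_lt (continuous_abs.comp Complex.continuous_im) continuous_const
  have hne : ((μ₀:ℂ) + 1) ≠ 0 := by
    have : ((μ₀ + 1 : ℝ) : ℂ) ≠ 0 := by
      exact_mod_cast (by positivity : (μ₀ + 1 : ℝ) ≠ 0)
    simpa using this
  have hMne : (M:ℂ) ≠ 0 := by exact_mod_cast hM.ne'
  -- value at 0
  have h00 := hrep 0 h0S
  have eq0' : (M:ℂ) * θ₀ = (M:ℂ) * (1 - 2 / ((μ₀:ℂ) + 1)) := by
    rw [← hθ₀, h00]; simp [hg0]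
  have eq0 : θ₀ * (μ₀ + 1) = μ₀ - 1 := by
    have h := eq0'
    field_simp at h
    have h' : M * θ₀ * (μ₀ + 1) = M * (μ₀ + 1 - 2) := by
      have h3 : θ₀ * (μ₀ + 1) = μ₀ + 1 - 2 := by exact_mod_cast h
      rw [mul_assoc, h3]
    have h2 : M * (θ₀ * (μ₀ + 1)) = M * (μ₀ - 1) := by linear_combination h'
    exact mul_left_cancel₀ hM.ne' h2
  -- derivative
  have he1 : HasDerivAt (fun z : ℂ => Complex.exp (↑Real.pi * z / (2*↑B)))
      (↑Real.pi / (2*↑B)) 0 := by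
    have h := (((hasDerivAt_id (0:ℂ)).const_mul (↑Real.pi : ℂ)).div_const (2*↑B)).cexp
    simpa using h
  have hu : HasDerivAt (fun z : ℂ => Complex.exp (↑Real.pi * z / ↑B) - 1)
      (↑Real.pi / ↑B) 0 := by
    have h := ((((hasDerivAt_id (0:ℂ)).const_mul (↑Real.pi : ℂ)).div_const (↑B)).cexp).sub_const 1
    simpa using h
  have hgc : HasDerivAt (fun z : ℂ => g (Complex.exp (↑Real.pi * z / ↑B) - 1))
      ((-(g₁:ℂ)) * (↑Real.pi / ↑B)) 0 := by
    have hg' : HasDerivAt g (-(g₁:ℂ)) ((fun z : ℂ => Complex.exp (↑Real.pi * z / ↑B) - 1) 0) := by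
      have := hgdiff.hasDerivAt
      rw [hg1] at this
      simpa using this
    exact hg'.comp 0 hu
  have hh : HasDerivAt (fun z : ℂ => (μ₀:ℂ) * Complex.exp (↑Real.pi * z / (2*↑B)) *
      g (Complex.exp (↑Real.pi * z / ↑B) - 1) + 1)
      ((μ₀:ℂ) * (↑Real.pi / (2*↑B)) + (μ₀:ℂ) * ((-(g₁:ℂ)) * (↑Real.pi / ↑B))) 0 := by
    have h := ((he1.const_mul ((μ₀:ℂ))).mul hgc).add_const 1
    refine h.congr_deriv ?_
    simp [hg0]
  have hne0 : ((μ₀:ℂ) * Complex.exp (↑Real.pi * (0:ℂ) / (2*↑B)) *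
      g (Complex.exp (↑Real.pi * (0:ℂ) / ↑B) - 1) + 1) ≠ 0 := by
    simpa [hg0] using hne
  have hF : HasDerivAt (fun z : ℂ => (M:ℂ) * (1 - 2 / ((μ₀:ℂ) * Complex.exp (↑Real.pi * z / (2*↑B)) *
      g (Complex.exp (↑Real.pi * z / ↑B) - 1) + 1)))
      ((M:ℂ) * (2 * ((μ₀:ℂ) * (↑Real.pi / (2*↑B)) + (μ₀:ℂ) * ((-(g₁:ℂ)) * (↑Real.pi / ↑B))) / ((μ₀:ℂ)+1)^2)) 0 := by
    have h := (((hasDerivAt_const (0:ℂ) (2:ℂ)).div hh hne0).const_sub 1).const_mul ((M:ℂ))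
    refine h.congr_deriv ?_
    simp [hg0]
    ring
  have heq : f =ᶠ[nhds (0:ℂ)] (fun z : ℂ => (M:ℂ) * (1 - 2 / ((μ₀:ℂ) * Complex.exp (↑Real.pi * z / (2*↑B)) *
      g (Complex.exp (↑Real.pi * z / ↑B) - 1) + 1))) :=
    Filter.eventuallyEq_of_mem (hSopen.mem_nhds h0S) hrep
  have hderiv : deriv f 0 = (M:ℂ) * (2 * ((μ₀:ℂ) * (↑Real.pi / (2*↑B)) + (μ₀:ℂ) * ((-(g₁:ℂ)) * (↑Real.pi / ↑B))) / ((μ₀:ℂ)+1)^2) :=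
    heq.deriv_eq.trans hF.deriv
  have hc := hθ₁.symm.trans hderiv
  have hπ : ((Real.pi:ℝ):ℂ) ≠ 0 := by exact_mod_cast Real.pi_ne_zero
  have hBne : ((B:ℝ):ℂ) ≠ 0 := by exact_mod_cast hB.ne'
  field_simp at hc
  have h'' : Real.pi * M * θ₁ * (2 * B * B * (μ₀ + 1) ^ 2) =
      M * (2 * (μ₀ * Real.pi * B + -(μ₀ * (g₁ * Real.pi) * (2 * B)))) * B := by
    have h3 : θ₁ * (μ₀ + 1) ^ 2 = μ₀ * (1 + -(2 * g₁)) := by exact_mod_cast hc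
    linear_combination (2*Real.pi*M*B*B) * h3
  have hπpos := Real.pi_pos
  have eq1 : θ₁ * (μ₀ + 1)^2 = μ₀ * (1 - 2*g₁) := by
    have hk : (2*Real.pi*M*B*B) * (θ₁ * (μ₀ + 1)^2) = (2*Real.pi*M*B*B) * (μ₀ * (1 - 2*g₁)) := by
      linear_combination h''
    exact mul_left_cancel₀ (by positivity) hk
  -- real algebra
  have hμ1 : (0:ℝ) < μ₀ + 1 := by linarith
  have h1m : 0 < 1 - θ₀ := by nlinarith [eq0]
  have h1p : 0 < 1 + θ₀ := by nlinarith [eq0]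
  have hpos : 0 < 1 - θ₀^2 := by nlinarith
  have haux : (1 - θ₀^2) * (μ₀ + 1)^2 = 4 * μ₀ := by
    linear_combination (-(θ₀*(μ₀+1) + μ₀ - 1)) * eq0
  have key4 : 4 * θ₁ = (1 - θ₀^2) * (1 - 2*g₁) := by
    have h4 : (4 * θ₁) * (μ₀+1)^2 = ((1 - θ₀^2) * (1 - 2*g₁)) * (μ₀+1)^2 := by
      linear_combination 4*eq1 - (1-2*g₁)*haux
    exact mul_right_cancel₀ (by positivity) h4
  refine ⟨?_, ?_, ?_, ?_, ?_⟩
  · rw [eq_div_iff (by linarith : (1:ℝ) - θ₀ ≠ 0)]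
    linear_combination -eq0
  · rw [eq_div_iff (by positivity : (2:ℝ)*(1 - θ₀^2) ≠ 0)]
    linear_combination key4
  · constructor
    · intro h
      by_contra hcon
      push_neg at hcon
      nlinarith [mul_nonneg hpos.le (show (0:ℝ) ≤ 2*g₁ - 1 by linarith)]
    · intro h
      nlinarith [mul_pos hpos (show (0:ℝ) < 1 - 2*g₁ by linarith)]
  · constructor
    · intro h
      by_contra hcon
      push_neg at hcon
      nlinarith [mul_nonneg hpos.le (show (0:ℝ) ≤ 1 - 2*g₁ by linarith)]
    · intro h
      nlinarith [mul_pos hpos (show (0:ℝ) < 2*g₁ - 1 by linarith)]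
  · constructor
    · intro h
      have hz : (1 - θ₀^2) * (1 - 2*g₁) = 0 := by linarith
      rcases mul_eq_zero.mp hz with h2 | h2
      · linarith
      · linarith
    · intro h
      linear_combination (1/4)*key4 - ((1-θ₀^2)/2)*h
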